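/- Fix real constants λ₀ > 0, a > -1, γ > 1/2, set α' = (1/2)·( (2γ-1)/(a+1) + 1 ), and for a nonnegative integer m let L_m^{(α')}(t) = Σ_{k=0}^{m} (-1)^k · Γ(m+α'+1) / ( Γ(k+α'+1)·(m-k)!·k! ) · t^k. Then ∫_{-∞}^{+∞} (λ₀²x²)^{(3a+2γ-1)/2}·x²·exp( -(λ₀²x²)^{a+1}/(a+1) )·[ L_m^{(α')}( (λ₀²x²)^{a+1}/(a+1) ) ]² dx = (a+1)^{α'}·Γ(m+α'+1) / ( λ₀³·m! ). -/

import Mathlib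

/-- The generalized Laguerre polynomial
`L_m^(α)(t) = Σ_{k=0}^{m} (-1)^k·Γ(m+α+1)/(Γ(k+α+1)·(m-k)!·k!)·t^k`. -/
noncomputable def lagPoly (α : ℝ) (m : ℕ) (t : ℝ) : ℝ :=
  ∑ k ∈ Finset.range (m + 1),
    (-1 : ℝ) ^ k * Real.Gamma ((m : ℝ) + α + 1)
      / (Real.Gamma ((k : ℝ) + α + 1) * (Nat.factorial (m - k) : ℝ) * (Nat.factorial k : ℝ))
      * t ^ k

open MeasureTheory Set Finset
section CombHelpers
open Finset Polynomial

lemma alt_sum_pow : ∀ j m : ℕ, j ≤ m →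
    ∑ l ∈ Finset.range (m+1), (-1:ℝ)^l * (m.choose l) * (l:ℝ)^j
      = if j = m then (-1:ℝ)^m * m.factorial else 0 := by
  intro j
  induction j using Nat.strong_induction_on with
  | _ j ih =>
    intro m hjm
    rcases Nat.eq_zero_or_pos j with rfl | hj
    · rcases eq_or_ne m 0 with rfl | hm
      · simp
      · rw [if_neg (by omega)]
        have h := Int.alternating_sum_range_choose_of_ne hm
        have : ((∑ i ∈ range (m + 1), (-1:ℤ) ^ i * ↑(m.choose i) : ℤ) : ℝ) = 0 := by
          rw [h]; norm_num
        push_cast at this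
        simpa using this
    · obtain ⟨j', rfl⟩ : ∃ j', j = j' + 1 := ⟨j - 1, by omega⟩
      obtain ⟨m', rfl⟩ : ∃ m', m = m' + 1 := ⟨m - 1, by omega⟩
      have hj'm' : j' ≤ m' := by omega
      have key : ∀ l' ∈ range (m' + 1),
          (-1:ℝ)^(l'+1) * ((m'+1).choose (l'+1)) * ((l':ℝ)+1)^(j'+1)
          = (-(m'+1:ℝ)) * ∑ i ∈ range (j'+1),
              (j'.choose i : ℝ) * ((-1:ℝ)^l' * (m'.choose l') * (l':ℝ)^i) := by
        intro l' _
        have hc : ((m'+1) * m'.choose l' : ℝ) = ((m'+1).choose (l'+1) * (l'+1) : ℝ) := by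
          exact_mod_cast congrArg (Nat.cast (R := ℝ)) (Nat.add_one_mul_choose_eq m' l')
        have hb : ((l':ℝ)+1)^(j') = ∑ i ∈ range (j'+1), (l':ℝ)^i * (j'.choose i) := by
          simpa using add_pow (l':ℝ) 1 j'
        calc (-1:ℝ)^(l'+1) * ((m'+1).choose (l'+1)) * ((l':ℝ)+1)^(j'+1)
            = (-(-1:ℝ)^l') * (((m'+1).choose (l'+1)) * ((l':ℝ)+1)) * ((l':ℝ)+1)^j' := by
              ring
          _ = (-(-1:ℝ)^l') * ((m'+1) * m'.choose l') * ((l':ℝ)+1)^j' := by rw [hc]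
          _ = (-(m'+1:ℝ)) * ((-1:ℝ)^l' * (m'.choose l') *
                ∑ i ∈ range (j'+1), (l':ℝ)^i * (j'.choose i)) := by rw [← hb]; ring
          _ = _ := by
              simp only [Finset.mul_sum]
              exact Finset.sum_congr rfl fun i _ => by ring
      calc ∑ l ∈ range (m' + 1 + 1), (-1:ℝ)^l * ((m'+1).choose l) * (l:ℝ)^(j'+1)
          = (∑ l' ∈ range (m' + 1), (-1:ℝ)^(l'+1) * ((m'+1).choose (l'+1)) * ((l':ℝ)+1)^(j'+1))
            + (-1:ℝ)^0 * ((m'+1).choose 0) * (0:ℝ)^(j'+1) := by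
            rw [Finset.sum_range_succ']; push_cast; ring_nf
        _ = ∑ l' ∈ range (m' + 1), (-(m'+1:ℝ)) * ∑ i ∈ range (j'+1),
              (j'.choose i : ℝ) * ((-1:ℝ)^l' * (m'.choose l') * (l':ℝ)^i) := by
            rw [Finset.sum_congr rfl key]; simp
        _ = (-(m'+1:ℝ)) * ∑ i ∈ range (j'+1), (j'.choose i : ℝ) *
              ∑ l' ∈ range (m' + 1), (-1:ℝ)^l' * (m'.choose l') * (l':ℝ)^i := by
            rw [← Finset.mul_sum, Finset.sum_comm]
            congr 1
            exact Finset.sum_congr rfl fun i _ => (Finset.mul_sum _ _ _).symm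
        _ = (-(m'+1:ℝ)) * ∑ i ∈ range (j'+1), (j'.choose i : ℝ) *
              (if i = m' then (-1:ℝ)^m' * m'.factorial else 0) := by
            congr 1
            refine Finset.sum_congr rfl fun i hi => ?_
            have hi' := Finset.mem_range.mp hi
            rw [ih i (by omega) m' (by omega)]
        _ = if j' + 1 = m' + 1 then (-1:ℝ)^(m'+1) * (m'+1).factorial else 0 := by
            rcases eq_or_ne j' m' with rfl | hne
            · rw [if_pos rfl, Finset.sum_eq_single j']
              · simp [Nat.factorial_succ, pow_succ]; ring
              · intro b _ hb; simp [hb]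
              · intro h; simp at h
            · rw [if_neg (by omega), Finset.sum_eq_zero, mul_zero]
              intro i hi
              rw [if_neg (by simp at hi; omega), mul_zero]


lemma alt_sum_poly (m : ℕ) (P : Polynomial ℝ) (hP : P.natDegree ≤ m) :
    ∑ l ∈ Finset.range (m+1), (-1:ℝ)^l * (m.choose l) * P.eval (l:ℝ)
      = (-1:ℝ)^m * m.factorial * P.coeff m := by
  have hev : ∀ x : ℝ, P.eval x = ∑ i ∈ range (m+1), P.coeff i * x ^ i :=
    fun x => P.eval_eq_sum_range' (Nat.lt_succ_of_le hP) x
  calc ∑ l ∈ Finset.range (m+1), (-1:ℝ)^l * (m.choose l) * P.eval (l:ℝ)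
      = ∑ i ∈ range (m+1), P.coeff i
          * ∑ l ∈ range (m+1), (-1:ℝ)^l * (m.choose l) * (l:ℝ)^i := by
        simp_rw [hev, Finset.mul_sum]
        rw [Finset.sum_comm]
        exact Finset.sum_congr rfl fun i _ => Finset.sum_congr rfl fun l _ => by ring
    _ = ∑ i ∈ range (m+1), P.coeff i * (if i = m then (-1:ℝ)^m * m.factorial else 0) := by
        refine Finset.sum_congr rfl fun i hi => ?_
        rw [alt_sum_pow i m (Nat.lt_succ_iff.mp (mem_range.mp hi))]
    _ = _ := by
        rw [Finset.sum_eq_single m]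
        · rw [if_pos rfl]; ring
        · intro b _ hb; rw [if_neg hb, mul_zero]
        · intro h; exact absurd (self_mem_range_succ m) h

lemma gamma_shift (x : ℝ) (hx : 0 < x) (k : ℕ) :
    Real.Gamma (x + k) = Real.Gamma x * ∏ i ∈ Finset.range k, (x + i) := by
  induction k with
  | zero => simp
  | succ k ihk =>
    have : x + (k+1:ℕ) = (x + k) + 1 := by push_cast; ring
    rw [this, Real.Gamma_add_one (by positivity), ihk, prod_range_succ]
    ring

lemma laguerre_sum (α : ℝ) (hα : 0 < α) (m : ℕ) :
    ∑ k ∈ range (m+1), ∑ l ∈ range (m+1),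
      ((-1:ℝ)^k * Real.Gamma ((m:ℝ) + α + 1)
        / (Real.Gamma ((k:ℝ) + α + 1) * ((m-k).factorial : ℝ) * (k.factorial : ℝ)))
      * ((-1:ℝ)^l * Real.Gamma ((m:ℝ) + α + 1)
        / (Real.Gamma ((l:ℝ) + α + 1) * ((m-l).factorial : ℝ) * (l.factorial : ℝ)))
      * Real.Gamma (α + k + l + 1)
      = Real.Gamma ((m:ℝ) + α + 1) / (m.factorial : ℝ) := by
  have hΓm : Real.Gamma ((m:ℝ) + α + 1) ≠ 0 :=
    ne_of_gt (Real.Gamma_pos_of_pos (by positivity))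
  -- inner sum evaluation
  have inner : ∀ k ∈ range (m+1),
      ∑ l ∈ range (m+1),
        ((-1:ℝ)^l * Real.Gamma ((m:ℝ) + α + 1)
          / (Real.Gamma ((l:ℝ) + α + 1) * ((m-l).factorial : ℝ) * (l.factorial : ℝ)))
        * Real.Gamma (α + k + l + 1)
      = if k = m then (-1:ℝ)^m * Real.Gamma ((m:ℝ) + α + 1) else 0 := by
    intro k hk
    have hk' : k ≤ m := by simpa using Nat.lt_succ_iff.mp (mem_range.mp hk)
    set Q : Polynomial ℝ := ∏ i ∈ range k, (X + C (α + 1 + i)) with hQ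
    have hQm : Q.Monic := monic_prod_of_monic _ _ fun i _ => monic_X_add_C _
    have hQd : Q.natDegree = k := by
      rw [hQ, natDegree_prod_of_monic _ _ fun i _ => monic_X_add_C _,
        Finset.sum_congr rfl fun i (_ : i ∈ range k) => natDegree_X_add_C _]
      simp
    have hQeval : ∀ l : ℕ, Real.Gamma (α + k + l + 1)
        = Real.Gamma ((l:ℝ) + α + 1) * Q.eval (l:ℝ) := by
      intro l
      have h1 : α + (k:ℝ) + l + 1 = ((l:ℝ) + α + 1) + k := by ring
      rw [h1, gamma_shift _ (by positivity), hQ, eval_prod]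
      congr 1
      exact Finset.prod_congr rfl fun i _ => by simp; ring
    have hQcoeff : Q.coeff m = if k = m then 1 else 0 := by
      rcases eq_or_ne k m with rfl | hne
      · simpa [hQd] using hQm.coeff_natDegree
      · rw [if_neg hne, coeff_eq_zero_of_natDegree_lt (by omega)]
    have step : ∀ l ∈ range (m+1),
        ((-1:ℝ)^l * Real.Gamma ((m:ℝ) + α + 1)
          / (Real.Gamma ((l:ℝ) + α + 1) * ((m-l).factorial : ℝ) * (l.factorial : ℝ)))
        * Real.Gamma (α + k + l + 1)
        = (Real.Gamma ((m:ℝ) + α + 1) / (m.factorial : ℝ))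
            * ((-1:ℝ)^l * (m.choose l) * Q.eval (l:ℝ)) := by
      intro l hl
      have hl' : l ≤ m := by simpa using Nat.lt_succ_iff.mp (mem_range.mp hl)
      have hΓl : Real.Gamma ((l:ℝ) + α + 1) ≠ 0 :=
        ne_of_gt (Real.Gamma_pos_of_pos (by positivity))
      have hchoose : (m.choose l : ℝ) = (m.factorial : ℝ) / ((l.factorial : ℝ) * ((m-l).factorial : ℝ)) :=
        Nat.cast_choose ℝ hl'
      rw [hQeval l, hchoose]
      have h1 : (l.factorial : ℝ) ≠ 0 := by positivity
      have h2 : ((m-l).factorial : ℝ) ≠ 0 := by positivity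
      have h3 : (m.factorial : ℝ) ≠ 0 := by positivity
      field_simp
    rw [Finset.sum_congr rfl step, ← Finset.mul_sum,
      alt_sum_poly m Q (by omega), hQcoeff]
    rcases eq_or_ne k m with rfl | hne
    · rw [if_pos rfl, if_pos rfl]
      field_simp
    · simp [hne]
  have hsq : (-1:ℝ)^m * (-1:ℝ)^m = 1 := by
    rw [← pow_add, ← two_mul, pow_mul]; norm_num
  calc ∑ k ∈ range (m+1), ∑ l ∈ range (m+1),
      ((-1:ℝ)^k * Real.Gamma ((m:ℝ) + α + 1)
        / (Real.Gamma ((k:ℝ) + α + 1) * ((m-k).factorial : ℝ) * (k.factorial : ℝ)))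
      * ((-1:ℝ)^l * Real.Gamma ((m:ℝ) + α + 1)
        / (Real.Gamma ((l:ℝ) + α + 1) * ((m-l).factorial : ℝ) * (l.factorial : ℝ)))
      * Real.Gamma (α + k + l + 1)
      = ∑ k ∈ range (m+1),
          ((-1:ℝ)^k * Real.Gamma ((m:ℝ) + α + 1)
            / (Real.Gamma ((k:ℝ) + α + 1) * ((m-k).factorial : ℝ) * (k.factorial : ℝ)))
          * (if k = m then (-1:ℝ)^m * Real.Gamma ((m:ℝ) + α + 1) else 0) := by
        refine Finset.sum_congr rfl fun k hk => ?_
        rw [← inner k hk, Finset.mul_sum]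
        exact Finset.sum_congr rfl fun l _ => by ring
    _ = ((-1:ℝ)^m * Real.Gamma ((m:ℝ) + α + 1)
          / (Real.Gamma ((m:ℝ) + α + 1) * (((m-m).factorial : ℕ) : ℝ) * (m.factorial : ℝ)))
          * ((-1:ℝ)^m * Real.Gamma ((m:ℝ) + α + 1)) := by
        rw [Finset.sum_eq_single m]
        · rw [if_pos rfl]
        · intro b _ hb; rw [if_neg hb, mul_zero]
        · intro h; exact absurd (self_mem_range_succ m) h
    _ = Real.Gamma ((m:ℝ) + α + 1) / (m.factorial : ℝ) := by
        have h3 : (m.factorial : ℝ) ≠ 0 := by positivity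
        simp only [Nat.sub_self, Nat.factorial_zero, Nat.cast_one, mul_one]
        field_simp
        linear_combination hsq

end CombHelpers

lemma integrableOn_pow_exp {s p b : ℝ} (hs : -1 < s) (hp : 0 < p) (hb : 0 < b) :
    IntegrableOn (fun x : ℝ => x ^ s * Real.exp (-b * x ^ p)) (Set.Ioi 0) := by
  have h1 : IntegrableOn (fun y : ℝ => y ^ ((s+1)/p - 1) * Real.exp (-b * y)) (Set.Ioi 0) := by
    have hq : (-1:ℝ) < (s+1)/p - 1 := by
      have : 0 < (s+1)/p := div_pos (by linarith) hp
      linarith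
    have := integrableOn_rpow_mul_exp_neg_mul_rpow (p := 1) hq zero_lt_one hb
    refine this.congr_fun (fun x hx => ?_) measurableSet_Ioi
    simp only [Real.rpow_one]
  have h2 := (integrableOn_Ioi_comp_rpow_iff'
    (fun y => y ^ ((s+1)/p - 1) * Real.exp (-b * y)) (ne_of_gt hp)).mpr h1
  refine h2.congr_fun (fun x hx => ?_) measurableSet_Ioi
  have hx0 : (0:ℝ) < x := hx
  have e1 : (x ^ p) ^ ((s+1)/p - 1) = x ^ (p * ((s+1)/p - 1)) :=
    (Real.rpow_mul hx0.le _ _).symm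
  simp only [smul_eq_mul]
  rw [e1, ← mul_assoc, ← Real.rpow_add hx0]
  congr 2
  field_simp
  ring


/-- the squared L²-norm of the odd parabose stationary states:
`∫ (λ₀²x²)^((3a+2γ-1)/2)·x²·exp(-(λ₀²x²)^(a+1)/(a+1))·[L_m^(α')((λ₀²x²)^(a+1)/(a+1))]² dx
  = (a+1)^(α')·Γ(m+α'+1)/(λ₀³·m!)` with `α' = ((2γ-1)/(a+1) + 1)/2`. -/
theorem stmt19 (lam a γ : ℝ) (hlam : 0 < lam) (ha : -1 < a) (hγ : 1 / 2 < γ) (m : ℕ) :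
    ∫ x : ℝ,
        (lam ^ 2 * x ^ 2) ^ ((3 * a + 2 * γ - 1) / 2) * x ^ 2
          * Real.exp (-((lam ^ 2 * x ^ 2) ^ (a + 1)) / (a + 1))
          * (lagPoly ((1 / 2) * ((2 * γ - 1) / (a + 1) + 1)) m
              ((lam ^ 2 * x ^ 2) ^ (a + 1) / (a + 1))) ^ 2
      = (a + 1) ^ ((1 / 2) * ((2 * γ - 1) / (a + 1) + 1))
          * Real.Gamma ((m : ℝ) + (1 / 2) * ((2 * γ - 1) / (a + 1) + 1) + 1)
          / (lam ^ 3 * (Nat.factorial m : ℝ)) := by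
  have ha1 : (0:ℝ) < a + 1 := by linarith
  set α : ℝ := (1 / 2) * ((2 * γ - 1) / (a + 1) + 1) with hαdef
  have hα : 0 < α := by
    have h1 : 0 < (2 * γ - 1) / (a + 1) := div_pos (by linarith) ha1
    rw [hαdef]; linarith
  set p : ℝ := 2 * (a + 1) with hpdef
  have hp : 0 < p := by rw [hpdef]; linarith
  set b : ℝ := lam ^ p / (a + 1) with hbdef
  have hlamp : 0 < lam ^ p := Real.rpow_pos_of_pos hlam p
  have hb : 0 < b := div_pos hlamp ha1
  set s : ℝ := 3 * a + 2 * γ - 1 with hsdef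
  set q : ℝ := s + 2 with hqdef
  have hq : -1 < q := by rw [hqdef, hsdef]; linarith
  have hkey : q + 1 = p * (α + 1) := by
    rw [hqdef, hsdef, hpdef, hαdef]; field_simp; ring
  set c : ℕ → ℝ := fun k => (-1 : ℝ) ^ k * Real.Gamma ((m : ℝ) + α + 1)
      / (Real.Gamma ((k : ℝ) + α + 1) * (Nat.factorial (m - k) : ℝ) * (Nat.factorial k : ℝ))
    with hcdef
  -- the integrand as a function
  set F : ℝ → ℝ := fun x =>
    (lam ^ 2 * x ^ 2) ^ ((3 * a + 2 * γ - 1) / 2) * x ^ 2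
      * Real.exp (-((lam ^ 2 * x ^ 2) ^ (a + 1)) / (a + 1))
      * (lagPoly α m ((lam ^ 2 * x ^ 2) ^ (a + 1) / (a + 1))) ^ 2 with hFdef
  -- step 1: even function reduction
  have step1 : (∫ x : ℝ, F x) = 2 * ∫ x in Ioi (0:ℝ), F x := by
    calc (∫ x : ℝ, F x) = ∫ x : ℝ, F |x| := by
          congr 1; funext x; rw [hFdef]; simp only [sq_abs]
      _ = 2 * ∫ x in Ioi (0:ℝ), F x := integral_comp_abs
  -- step 2: pointwise form on Ioi 0
  have hpt : ∀ x ∈ Ioi (0:ℝ), F x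
      = ∑ k ∈ range (m+1), ∑ l ∈ range (m+1),
          (lam ^ s * (c k * c l * (b ^ k * b ^ l)))
            * (x ^ (q + p * k + p * l) * Real.exp (-b * x ^ p)) := by
    intro x hx
    have hx0 : (0:ℝ) < x := hx
    have hlx : (0:ℝ) < lam * x := by positivity
    have e1 : lam ^ 2 * x ^ 2 = (lam * x) ^ 2 := by ring
    have epow : ∀ u : ℝ, (lam ^ 2 * x ^ 2) ^ u = lam ^ (2 * u) * x ^ (2 * u) := by
      intro u
      rw [e1, ← Real.rpow_natCast (lam * x) 2, ← Real.rpow_mul hlx.le,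
        show ((2:ℕ):ℝ) * u = 2 * u by norm_num,
        Real.mul_rpow hlam.le hx0.le]
    have e2 : (lam ^ 2 * x ^ 2) ^ ((3 * a + 2 * γ - 1) / 2) = lam ^ s * x ^ s := by
      rw [epow, show 2 * ((3 * a + 2 * γ - 1) / 2) = s by rw [hsdef]; ring]
    have e3 : (lam ^ 2 * x ^ 2) ^ (a + 1) = lam ^ p * x ^ p := by
      rw [epow, show 2 * (a + 1) = p from hpdef.symm]
    have e5 : Real.exp (-((lam ^ 2 * x ^ 2) ^ (a + 1)) / (a + 1)) = Real.exp (-b * x ^ p) := by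
      rw [e3]; congr 1; rw [hbdef]; field_simp
    have e6 : (lam ^ 2 * x ^ 2) ^ (a + 1) / (a + 1) = b * x ^ p := by
      rw [e3, hbdef]; ring
    have e7 : lagPoly α m (b * x ^ p) = ∑ k ∈ range (m+1), c k * (b ^ k * x ^ (p * k)) := by
      rw [lagPoly]
      refine Finset.sum_congr rfl fun k _ => ?_
      rw [mul_pow, ← Real.rpow_natCast (x ^ p) k, ← Real.rpow_mul hx0.le]
    have e10 : (∑ k ∈ range (m+1), c k * (b ^ k * x ^ (p * (k:ℕ))))^2
        = ∑ k ∈ range (m+1), ∑ l ∈ range (m+1),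
            (c k * (b ^ k * x ^ (p * (k:ℕ)))) * (c l * (b ^ l * x ^ (p * (l:ℕ)))) := by
      rw [sq, Finset.sum_mul_sum]
    rw [hFdef]
    simp only
    rw [e2, e5, e6, e7, e10]
    rw [Finset.mul_sum]
    refine Finset.sum_congr rfl fun k _ => ?_
    rw [Finset.mul_sum]
    refine Finset.sum_congr rfl fun l _ => ?_
    have e8 : x ^ s * x ^ 2 = x ^ q := by
      rw [← Real.rpow_natCast x 2, ← Real.rpow_add hx0, hqdef]; norm_num
    have e9 : x ^ (q + p * k + p * l) = x ^ q * x ^ (p * k) * x ^ (p * l) := by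
      rw [Real.rpow_add hx0, Real.rpow_add hx0]
    rw [e9, ← e8]
    ring
  -- step 3: integrate term by term
  have hint : ∀ k l : ℕ, IntegrableOn
      (fun x : ℝ => x ^ (q + p * k + p * l) * Real.exp (-b * x ^ p)) (Ioi 0) := by
    intro k l
    refine integrableOn_pow_exp ?_ hp hb
    have h1 : (0:ℝ) ≤ p * k := by positivity
    have h2 : (0:ℝ) ≤ p * l := by positivity
    linarith
  have hval : ∀ k l : ℕ, (∫ x in Ioi (0:ℝ), x ^ (q + p * k + p * l) * Real.exp (-b * x ^ p))
      = b ^ (-(α + 1 + k + l)) * (1/p) * Real.Gamma (α + 1 + k + l) := by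
    intro k l
    rw [integral_rpow_mul_exp_neg_mul_rpow hp (by
      have h1 : (0:ℝ) ≤ p * k := by positivity
      have h2 : (0:ℝ) ≤ p * l := by positivity
      linarith) hb]
    rw [neg_div]
    have harg : (q + p * k + p * l + 1) / p = α + 1 + k + l := by
      field_simp
      linear_combination hkey
    rw [harg]
  have step3 : (∫ x in Ioi (0:ℝ), F x)
      = lam ^ s * (1/p) * b ^ (-(α+1))
          * ∑ k ∈ range (m+1), ∑ l ∈ range (m+1),
              c k * c l * Real.Gamma (α + k + l + 1) := by
    rw [setIntegral_congr_fun measurableSet_Ioi hpt]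
    rw [integral_finset_sum _ (fun k _ => integrable_finset_sum _ (fun l _ =>
      ((hint k l).const_mul _)))]
    rw [Finset.mul_sum]
    refine Finset.sum_congr rfl fun k _ => ?_
    rw [integral_finset_sum _ (fun l _ => ((hint k l).const_mul _))]
    rw [Finset.mul_sum]
    refine Finset.sum_congr rfl fun l _ => ?_
    rw [integral_const_mul, hval k l]
    have eb : (b:ℝ) ^ k * b ^ l * b ^ (-(α + 1 + k + l)) = b ^ (-(α+1)) := by
      rw [← Real.rpow_natCast b k, ← Real.rpow_natCast b l,
        ← Real.rpow_add hb, ← Real.rpow_add hb]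
      congr 1; ring
    have eΓ : Real.Gamma (α + 1 + k + l) = Real.Gamma (α + k + l + 1) := by
      congr 1; ring
    rw [← eb, eΓ]
    ring
  have hsum : (∑ k ∈ range (m+1), ∑ l ∈ range (m+1),
      c k * c l * Real.Gamma (α + k + l + 1))
      = Real.Gamma ((m:ℝ) + α + 1) / (m.factorial : ℝ) := by
    simp only [hcdef]
    exact laguerre_sum α hα m
  rw [step1, step3, hsum]
  have hb1 : b ^ (-(α+1)) = lam ^ (-(q+1)) * (a+1) ^ (α+1) := by
    rw [hbdef, Real.div_rpow hlamp.le ha1.le, ← Real.rpow_mul hlam.le,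
      show p * -(α+1) = -(q+1) by linear_combination hkey,
      Real.rpow_neg ha1.le, div_eq_mul_inv, inv_inv]
  have hl3 : lam ^ s * lam ^ (-(q+1)) = lam ^ (-3 : ℝ) := by
    rw [← Real.rpow_add hlam]; congr 1; rw [hqdef]; ring
  have hlam3 : lam ^ (-3 : ℝ) = (lam ^ (3:ℕ))⁻¹ := by
    rw [Real.rpow_neg hlam.le]
    congr 1
    rw [show (3:ℝ) = ((3:ℕ):ℝ) by norm_num, Real.rpow_natCast]
  have hp2 : 2 * (1/p) * (a+1) = 1 := by
    rw [hpdef]; field_simp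
  have hfac : (0:ℝ) < (m.factorial : ℝ) := by positivity
  calc 2 * (lam ^ s * (1/p) * b ^ (-(α+1)) * (Real.Gamma ((m:ℝ)+α+1) / (m.factorial : ℝ)))
      = (2 * (1/p) * (a+1)) * ((a+1) ^ α
          * ((lam ^ s * lam ^ (-(q+1))) * (Real.Gamma ((m:ℝ)+α+1) / (m.factorial : ℝ)))) := by
        rw [hb1, Real.rpow_add_one (ne_of_gt ha1)]
        ring
    _ = (a+1) ^ α * Real.Gamma ((m:ℝ)+α+1) / (lam ^ 3 * (m.factorial : ℝ)) := by
        rw [hl3, hlam3, hp2]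
        have : lam ^ (3:ℕ) ≠ 0 := by positivity
        field_simp
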